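/- Let K be a field, let q ∈ K be nonzero with q² + 1 ≠ 0, and let A be an associative unital K-algebra. Suppose a, b ∈ A satisfy a² = a, b² = b, and bab = (q + q⁻¹)⁻² b. Set g = (1 + q⁻²)a − 1, g' = (q² + 1)a − 1, and in A ⊗_K A set G̃ = q·(g ⊗ g), G̃' = q⁻¹·(g' ⊗ g'), and Ẽ_b = (q + q⁻¹)²·(b ⊗ b). Then Ẽ_b G̃ Ẽ_b = q³ Ẽ_b and Ẽ_b G̃' Ẽ_b = q⁻³ Ẽ_b; that is, the BMW relation (R2) E_i G_{i−1}^{±1} E_i = r^{±1} E_i holds with r = q³. -/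

import Mathlib

open scoped TensorProduct

/-- Lemma 5.4(3): for idempotents `a, b` with `b a b = (q+q⁻¹)⁻² b`
(adjacent Temperley-Lieb generators), `g = (1+q⁻²)a - 1` with inverse
`g' = (q²+1)a - 1`, `G̃ = q (g ⊗ g)`, `G̃' = q⁻¹ (g' ⊗ g')`, and
`Ẽ_b = (q+q⁻¹)² (b ⊗ b)` in `A ⊗[K] A`, the BMW relation (R2) with `r = q³`
holds: `Ẽ_b G̃ Ẽ_b = q³ Ẽ_b` and `Ẽ_b G̃' Ẽ_b = q⁻³ Ẽ_b`. -/
theorem bmw_R2_relation (K : Type*) [Field K] (A : Type*) [Ring A] [Algebra K A]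
    (q : K) (hq : q ≠ 0) (hq2 : q ^ 2 + 1 ≠ 0)
    (a b : A) (ha : a * a = a) (hb : b * b = b)
    (hbab : b * a * b = ((q + q⁻¹) ^ 2)⁻¹ • b) :
    (((q + q⁻¹) ^ 2) • (b ⊗ₜ[K] b))
        * (q • (((1 + q⁻¹ ^ 2) • a - 1) ⊗ₜ[K] ((1 + q⁻¹ ^ 2) • a - 1)))
        * (((q + q⁻¹) ^ 2) • (b ⊗ₜ[K] b))
      = q ^ 3 • (((q + q⁻¹) ^ 2) • (b ⊗ₜ[K] b)) ∧
    (((q + q⁻¹) ^ 2) • (b ⊗ₜ[K] b))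
        * (q⁻¹ • (((q ^ 2 + 1) • a - 1) ⊗ₜ[K] ((q ^ 2 + 1) • a - 1)))
        * (((q + q⁻¹) ^ 2) • (b ⊗ₜ[K] b))
      = q⁻¹ ^ 3 • (((q + q⁻¹) ^ 2) • (b ⊗ₜ[K] b)) := by
  set c : K := (q + q⁻¹) ^ 2 with hc
  have hqq : q + q⁻¹ ≠ 0 := by
    intro h
    apply hq2
    have : q * (q + q⁻¹) = q ^ 2 + 1 := by field_simp
    rw [h, mul_zero] at this
    exact this.symm
  have hcne : c ≠ 0 := pow_ne_zero _ hqq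
  have h4 : 1 + q ^ 2 * 2 + q ^ 4 ≠ 0 := by
    intro h0; exact pow_ne_zero 2 hq2 (by linear_combination h0)
  have h5 : q ^ 5 + q ^ 7 * 2 + q ^ 9 ≠ 0 := by
    intro h0
    exact mul_ne_zero (pow_ne_zero 5 hq) (pow_ne_zero 2 hq2) (by linear_combination h0)
  -- general helper: for x with b*x*b = μ • b,
  have key : ∀ (s μ : K) (x : A), b * x * b = μ • b →
      (c • (b ⊗ₜ[K] b)) * (s • (x ⊗ₜ[K] x)) * (c • (b ⊗ₜ[K] b))
        = (c * s * c * (μ * μ)) • (b ⊗ₜ[K] b) := by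
    intro s μ x hx
    simp only [smul_mul_assoc, mul_smul_comm, Algebra.TensorProduct.tmul_mul_tmul, hx,
      TensorProduct.smul_tmul', TensorProduct.tmul_smul, smul_smul]
    congr 1
    ring
  constructor
  · have hbgb : b * ((1 + q⁻¹ ^ 2) • a - 1) * b = (-(q ^ 2) / (q ^ 2 + 1)) • b := by
      have : b * ((1 + q⁻¹ ^ 2) • a - 1) * b
          = (1 + q⁻¹ ^ 2) • (b * a * b) - b * b := by
        rw [mul_sub, sub_mul, mul_one, mul_smul_comm, smul_mul_assoc]
      have hs : (1 + q⁻¹ ^ 2) * c⁻¹ = -(q ^ 2) / (q ^ 2 + 1) + 1 := by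
        rw [hc]; field_simp
        ring
      rw [this, hbab, hb, smul_smul, hs, add_smul, one_smul, add_sub_cancel_right]
    rw [key q _ _ hbgb]
    rw [smul_smul]
    congr 1
    rw [hc]
    field_simp [h4, h5]
  · have hbgb : b * ((q ^ 2 + 1) • a - 1) * b = (-1 / (q ^ 2 + 1)) • b := by
      have : b * ((q ^ 2 + 1) • a - 1) * b
          = (q ^ 2 + 1) • (b * a * b) - b * b := by
        rw [mul_sub, sub_mul, mul_one, mul_smul_comm, smul_mul_assoc]
      have hs : (q ^ 2 + 1) * c⁻¹ = -1 / (q ^ 2 + 1) + 1 := by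
        rw [hc]; field_simp
        ring
      rw [this, hbab, hb, smul_smul, hs, add_smul, one_smul, add_sub_cancel_right]
    rw [key q⁻¹ _ _ hbgb]
    rw [smul_smul]
    congr 1
    rw [hc, inv_pow]
    field_simp
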